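/- (Kleitman Inequality.) Let F_1, …, F_s ⊆ 2^[n] be cross-dependent families and let k_1, …, k_s be nonnegative integers satisfying k_1 + … + k_s = n. Then Σ_{i=1}^{s} φ_i(k_i) ≤ s−1. -/

import Mathlib

set_option maxHeartbeats 1000000

open Finset

/-- `φ(ℓ)` for a family `F ⊆ 2^[n]`: the fraction `|F^(ℓ)| / C(n, ℓ)` of
`ℓ`-element subsets of `[n]` belonging to `F`. -/
noncomputable def phi (n : ℕ) (F : Finset (Finset ℕ)) (ℓ : ℕ) : ℝ :=
  ((F.filter fun A => A.card = ℓ).card : ℝ) / (n.choose ℓ : ℝ)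

/-- Families `F 1, …, F s` are cross-dependent if one cannot pick `f i ∈ F i`
with the `f i` pairwise disjoint. -/
def CrossDep {s : ℕ} (F : Fin s → Finset (Finset ℕ)) : Prop :=
  ¬ ∃ f : Fin s → Finset ℕ, (∀ i, f i ∈ F i) ∧
      Pairwise fun i j => Disjoint (f i) (f j)

lemma fiber_card_eq (n : ℕ) (I B B' : Finset (Fin n)) (hB : B.card = I.card)
    (hB' : B'.card = I.card) :
    (univ.filter fun σ : Equiv.Perm (Fin n) => I.image σ = B).card
      = (univ.filter fun σ : Equiv.Perm (Fin n) => I.image σ = B').card := by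
  classical
  let e : {x // x ∈ B} ≃ {x // x ∈ B'} := Finset.equivOfCardEq (hB.trans hB'.symm)
  let τ : Equiv.Perm (Fin n) := Equiv.extendSubtype e
  have hτ : B.image τ = B' := by
    apply Finset.eq_of_subset_of_card_le
    · intro y hy
      simp only [Finset.mem_image] at hy
      obtain ⟨x, hx, rfl⟩ := hy
      exact Equiv.extendSubtype_mem e x hx
    · rw [Finset.card_image_of_injective _ τ.injective, hB', hB]
  have hτ' : B'.image ⇑τ⁻¹ = B := by
    rw [← hτ, Finset.image_image]
    have : ⇑τ⁻¹ ∘ ⇑τ = id := by ext x; simp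
    rw [this, Finset.image_id]
  refine Finset.card_bij' (fun σ _ => τ * σ) (fun σ _ => τ⁻¹ * σ) ?_ ?_ ?_ ?_
  · intro σ hσ
    simp only [Finset.mem_filter, Finset.mem_univ, true_and] at hσ ⊢
    rw [Equiv.Perm.coe_mul, ← Finset.image_image, hσ, hτ]
  · intro σ hσ
    simp only [Finset.mem_filter, Finset.mem_univ, true_and] at hσ ⊢
    rw [Equiv.Perm.coe_mul, ← Finset.image_image, hσ, hτ']
  · intro σ _; group
  · intro σ _; group

lemma count_mul_choose (n : ℕ) (I B : Finset (Fin n)) (hB : B.card = I.card) :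
    (univ.filter fun σ : Equiv.Perm (Fin n) => I.image σ = B).card * n.choose I.card
      = n.factorial := by
  classical
  have hpart : (univ : Finset (Equiv.Perm (Fin n))).card
      = ∑ B' ∈ powersetCard I.card (univ : Finset (Fin n)),
          (univ.filter fun σ : Equiv.Perm (Fin n) => I.image σ = B').card := by
    refine Finset.card_eq_sum_card_fiberwise fun σ _ => ?_
    rw [Finset.mem_coe, Finset.mem_powersetCard]
    exact ⟨Finset.subset_univ _, Finset.card_image_of_injective _ σ.injective⟩
  have h2 : ∀ B' ∈ powersetCard I.card (univ : Finset (Fin n)),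
      (univ.filter fun σ : Equiv.Perm (Fin n) => I.image σ = B').card
        = (univ.filter fun σ : Equiv.Perm (Fin n) => I.image σ = B).card := by
    intro B' hB'
    rw [Finset.mem_powersetCard] at hB'
    exact fiber_card_eq n I B' B hB'.2 hB
  rw [Finset.sum_congr rfl h2, Finset.sum_const, smul_eq_mul, Finset.card_powersetCard] at hpart
  simp only [Finset.card_univ, Fintype.card_fin, Fintype.card_perm] at hpart
  rw [mul_comm]
  exact hpart.symm

lemma attachFin_image_val {n : ℕ} (A : Finset ℕ) (h : ∀ m ∈ A, m < n) :
    (A.attachFin h).image Fin.val = A := by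
  ext m
  simp only [Finset.mem_image, Finset.mem_attachFin]
  constructor
  · rintro ⟨x, hx, rfl⟩; exact hx
  · intro hm; exact ⟨⟨m, h m hm⟩, hm, rfl⟩

theorem stmt_3 (n s : ℕ) (F : Fin s → Finset (Finset ℕ))
    (hsub : ∀ i, ∀ A ∈ F i, A ⊆ Finset.range n)
    (hcross : CrossDep F)
    (k : Fin s → ℕ) (hk : ∑ i, k i = n) :
    ∑ i, phi n (F i) (k i) ≤ (s : ℝ) - 1 := by
  classical
  rcases Nat.eq_zero_or_pos s with hs0 | hs
  · exfalso
    apply hcross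
    subst hs0
    exact ⟨Fin.elim0, fun i => i.elim0, fun i => i.elim0⟩
  -- block structure
  set kk : ℕ → ℕ := fun j => if h : j < s then k ⟨j, h⟩ else 0 with hkkdef
  set a : ℕ → ℕ := fun m => ∑ t ∈ Finset.range m, kk t with hadef
  have hkk : ∀ i : Fin s, kk i.val = k i := by
    intro i; simp [hkkdef]
  have han : a s = n := by
    have h0 : a s = ∑ t ∈ Finset.range s, kk t := rfl
    rw [h0, ← hk, ← Fin.sum_univ_eq_sum_range kk s]
    exact Finset.sum_congr rfl fun i _ => hkk i
  have hstep : ∀ i : Fin s, a (i.val + 1) = a i.val + k i := by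
    intro i
    rw [hadef]
    simp only
    rw [Finset.sum_range_succ, hkk i]
  have hmono : ∀ p q : ℕ, p ≤ q → a p ≤ a q := by
    intro p q hpq
    exact Finset.sum_le_sum_of_subset (Finset.range_subset_range.2 hpq)
  have hbound : ∀ i : Fin s, a i.val + k i ≤ n := by
    intro i
    rw [← hstep i, ← han]
    exact hmono _ _ i.isLt
  have hIlt : ∀ i : Fin s, ∀ m ∈ Finset.Ico (a i.val) (a i.val + k i), m < n := by
    intro i m hm
    rw [Finset.mem_Ico] at hm
    exact lt_of_lt_of_le hm.2 (hbound i)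
  set Iset : Fin s → Finset (Fin n) :=
    fun i => (Finset.Ico (a i.val) (a i.val + k i)).attachFin (hIlt i) with hIdef
  have hIcard : ∀ i, (Iset i).card = k i := by
    intro i
    rw [hIdef]
    simp only
    rw [Finset.card_attachFin, Nat.card_Ico]
    omega
  set blk : Fin s → Equiv.Perm (Fin n) → Finset ℕ :=
    fun i σ => (Iset i).image (fun x => (σ x : ℕ)) with hblkdef
  have hinj : ∀ σ : Equiv.Perm (Fin n), Function.Injective (fun x : Fin n => (σ x : ℕ)) :=
    fun σ => Fin.val_injective.comp σ.injective
  have hIdisj : ∀ p q : Fin s, p ≠ q → Disjoint (Iset p) (Iset q) := by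
    have key : ∀ p q : Fin s, p < q → a p.val + k p ≤ a q.val := by
      intro p q hpq
      rw [← hstep p]
      exact hmono _ _ (by exact_mod_cast hpq)
    intro p q hpq
    rw [Finset.disjoint_left]
    intro x hx hx'
    rw [hIdef] at hx hx'
    simp only [Finset.mem_attachFin, Finset.mem_Ico] at hx hx'
    rcases hpq.lt_or_gt with h | h
    · have := key p q h; omega
    · have := key q p h; omega
  have hdisj : ∀ σ : Equiv.Perm (Fin n),
      Pairwise fun i j => Disjoint (blk i σ) (blk j σ) := by
    intro σ i j hij
    rw [hblkdef]
    simp only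
    rw [Finset.disjoint_image (hinj σ)]
    exact hIdisj i j hij
  have hblkcard : ∀ i σ, (blk i σ).card = k i := by
    intro i σ
    rw [hblkdef]
    simp only
    rw [Finset.card_image_of_injective _ (hinj σ), hIcard]
  -- per-family counting
  set c : Fin s → ℕ :=
    fun i => (univ.filter fun σ : Equiv.Perm (Fin n) => blk i σ ∈ F i).card with hcdef
  have hmain : ∀ i, c i * n.choose (k i)
      = ((F i).filter fun A => A.card = k i).card * n.factorial := by
    intro i
    set t := (F i).filter fun A => A.card = k i with htdef
    have hfib : c i = ∑ A ∈ t,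
        ((univ.filter fun σ : Equiv.Perm (Fin n) => blk i σ ∈ F i).filter
          fun σ => blk i σ = A).card := by
      rw [hcdef]
      refine Finset.card_eq_sum_card_fiberwise fun σ hσ => ?_
      rw [Finset.mem_coe, Finset.mem_filter] at hσ
      rw [Finset.mem_coe, htdef, Finset.mem_filter]
      exact ⟨hσ.2, hblkcard i σ⟩
    have hAlt : ∀ A ∈ t, ∀ m ∈ A, m < n := by
      intro A hA m hm
      rw [htdef, Finset.mem_filter] at hA
      have := hsub i A hA.1 hm
      rwa [Finset.mem_range] at this
    have hfib2 : ∀ A (hA : A ∈ t),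
        ((univ.filter fun σ : Equiv.Perm (Fin n) => blk i σ ∈ F i).filter
          fun σ => blk i σ = A).card
        = (univ.filter fun σ : Equiv.Perm (Fin n) =>
            (Iset i).image σ = A.attachFin (hAlt A hA)).card := by
      intro A hA
      congr 1
      rw [Finset.filter_filter]
      apply Finset.filter_congr
      intro σ _
      have himg : blk i σ = ((Iset i).image σ).image Fin.val := by
        rw [Finset.image_image]; rfl
      have hAim : (A.attachFin (hAlt A hA)).image Fin.val = A := attachFin_image_val A _
      constructor
      · rintro ⟨-, h2⟩
        apply Finset.image_injective Fin.val_injective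
        rw [← himg, h2, hAim]
      · intro h
        have : blk i σ = A := by rw [himg, h, hAim]
        rw [htdef, Finset.mem_filter] at hA
        exact ⟨this ▸ hA.1, this⟩
    have hfib' : c i = ∑ A ∈ t.attach,
        (univ.filter fun σ : Equiv.Perm (Fin n) =>
          (Iset i).image σ = A.1.attachFin (hAlt A.1 A.2)).card := by
      rw [hfib, ← Finset.sum_attach t (fun A =>
        ((univ.filter fun σ : Equiv.Perm (Fin n) => blk i σ ∈ F i).filter
          fun σ => blk i σ = A).card)]
      exact Finset.sum_congr rfl fun A _ => hfib2 A.1 A.2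
    calc c i * n.choose (k i)
        = ∑ A ∈ t.attach, (univ.filter fun σ : Equiv.Perm (Fin n) =>
            (Iset i).image σ = A.1.attachFin (hAlt A.1 A.2)).card * n.choose (k i) := by
          rw [hfib', Finset.sum_mul]
      _ = ∑ A ∈ t.attach, n.factorial := by
          refine Finset.sum_congr rfl fun A _ => ?_
          have hcard : (A.1.attachFin (hAlt A.1 A.2)).card = (Iset i).card := by
            rw [Finset.card_attachFin, hIcard]
            exact (Finset.mem_filter.1 A.2).2
          have := count_mul_choose n (Iset i) (A.1.attachFin (hAlt A.1 A.2)) hcard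
          rwa [hIcard] at this
      _ = t.card * n.factorial := by
          rw [Finset.sum_const, Finset.card_attach, smul_eq_mul]
  -- global bound
  have hsumbound : ∑ i, c i ≤ (s - 1) * n.factorial := by
    have hswap : ∑ i, c i
        = ∑ σ : Equiv.Perm (Fin n), ∑ i, (if blk i σ ∈ F i then 1 else 0) := by
      rw [Finset.sum_comm]
      refine Finset.sum_congr rfl fun i _ => ?_
      rw [hcdef]
      simp only
      rw [Finset.card_filter]
    rw [hswap]
    calc ∑ σ : Equiv.Perm (Fin n), ∑ i, (if blk i σ ∈ F i then 1 else 0)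
        ≤ ∑ _σ : Equiv.Perm (Fin n), (s - 1) := by
          refine Finset.sum_le_sum fun σ _ => ?_
          obtain ⟨i0, hi0⟩ : ∃ i0, blk i0 σ ∉ F i0 := by
            by_contra hcon
            push_neg at hcon
            exact hcross ⟨fun i => blk i σ, hcon, hdisj σ⟩
          calc ∑ i, (if blk i σ ∈ F i then 1 else 0)
              = ∑ i ∈ univ.erase i0, (if blk i σ ∈ F i then 1 else 0) := by
                rw [Finset.sum_erase (univ : Finset (Fin s))
                  (f := fun i => if blk i σ ∈ F i then (1 : ℕ) else 0) (a := i0) (if_neg hi0)]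
            _ ≤ ∑ _i ∈ univ.erase i0, 1 :=
                Finset.sum_le_sum fun i _ => by split <;> omega
            _ = s - 1 := by
                rw [Finset.sum_const, smul_eq_mul, mul_one,
                  Finset.card_erase_of_mem (Finset.mem_univ i0), Finset.card_univ,
                  Fintype.card_fin]
      _ = (s - 1) * n.factorial := by
          rw [Finset.sum_const, smul_eq_mul, Finset.card_univ, Fintype.card_perm,
            Fintype.card_fin, mul_comm]
  -- pass to reals
  have hfacpos : (0 : ℝ) < n.factorial := by exact_mod_cast n.factorial_pos
  have hphi : ∀ i, phi n (F i) (k i) = (c i : ℝ) / n.factorial := by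
    intro i
    have hkle : k i ≤ n := by
      rw [← hk]
      exact Finset.single_le_sum (fun _ _ => Nat.zero_le _) (Finset.mem_univ i)
    have hchoose : (0 : ℝ) < n.choose (k i) := by
      exact_mod_cast Nat.choose_pos hkle
    rw [phi, div_eq_div_iff hchoose.ne' hfacpos.ne']
    exact_mod_cast (hmain i).symm
  calc ∑ i, phi n (F i) (k i) = (∑ i, (c i : ℝ)) / n.factorial := by
        rw [Finset.sum_div]
        exact Finset.sum_congr rfl fun i _ => hphi i
    _ ≤ ((s : ℝ) - 1) := by
        rw [div_le_iff₀ hfacpos]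
        have : ((∑ i, c i : ℕ) : ℝ) ≤ (((s - 1) * n.factorial : ℕ) : ℝ) :=
          Nat.cast_le.2 hsumbound
        push_cast [Nat.cast_sub hs] at this
        convert this using 2
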